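/- If G is a near-bipartite graph containing no induced subgraph isomorphic to P_1+P_2 (an edge plus an isolated vertex), then the minimum size of an independent feedback vertex set of G equals the minimum size of a feedback vertex set of G. -/
import Mathlib


open SimpleGraph

/-- `S` is an independent set of `G`. -/
def IsIS {V : Type*} (G : SimpleGraph V) (S : Set V) : Prop :=
  S.Pairwise fun u v => ¬ G.Adj u v

/-- `G` contains no induced subgraph isomorphic to `H`. -/
def HFree {W V : Type*} (H : SimpleGraph W) (G : SimpleGraph V) : Prop :=
  IsEmpty (H ↪g G)

/-- `G` is bipartite: the vertex set splits into two independent sets. -/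
def IsBip {V : Type*} (G : SimpleGraph V) : Prop :=
  ∃ X : Set V, IsIS G X ∧ IsIS G Xᶜ

/-- `S` is a vertex cover of `G`. -/
def IsVC {V : Type*} (G : SimpleGraph V) (S : Finset V) : Prop :=
  ∀ ⦃u v⦄, G.Adj u v → u ∈ S ∨ v ∈ S

/-- minimum size of a vertex cover. -/
noncomputable def vc {V : Type*} (G : SimpleGraph V) : ℕ :=
  sInf {n | ∃ S : Finset V, IsVC G S ∧ S.card = n}

/-- minimum size of an independent vertex cover. -/
noncomputable def ivc {V : Type*} (G : SimpleGraph V) : ℕ :=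
  sInf {n | ∃ S : Finset V, IsVC G S ∧ IsIS G ↑S ∧ S.card = n}

/-- `S` is a feedback vertex set of `G`: removing it leaves a forest. -/
def IsFVS {V : Type*} (G : SimpleGraph V) (S : Finset V) : Prop :=
  (G.induce ((S : Set V)ᶜ)).IsAcyclic

/-- minimum size of a feedback vertex set. -/
noncomputable def fvs {V : Type*} (G : SimpleGraph V) : ℕ :=
  sInf {n | ∃ S : Finset V, IsFVS G S ∧ S.card = n}

/-- minimum size of an independent feedback vertex set. -/
noncomputable def ifvs {V : Type*} (G : SimpleGraph V) : ℕ :=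
  sInf {n | ∃ S : Finset V, IsFVS G S ∧ IsIS G ↑S ∧ S.card = n}

/-- `G` is near-bipartite: it has an independent feedback vertex set. -/
def NearBip {V : Type*} (G : SimpleGraph V) : Prop :=
  ∃ S : Finset V, IsFVS G S ∧ IsIS G ↑S

/-- `P_1 + P_2`: one edge plus one isolated vertex. -/
def p1p2 : SimpleGraph (Fin 3) :=
  SimpleGraph.fromRel fun u v => u = 0 ∧ v = 1


section Helpers

lemma good {V : Type*} {G : SimpleGraph V} (hfree : HFree p1p2 G)
    {u v w : V} (huv : G.Adj u v) (h1 : ¬ G.Adj u w) (h2 : ¬ G.Adj v w) :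
    u = w ∨ v = w := by
  by_contra hc
  push_neg at hc
  obtain ⟨hu, hv⟩ := hc
  have hne := huv.ne
  refine hfree.false ⟨⟨![u, v, w], ?_⟩, ?_⟩
  · intro a b hab
    fin_cases a <;> fin_cases b <;> simp_all [Matrix.cons_val_zero, Matrix.cons_val_one]
  · intro a b
    fin_cases a <;> fin_cases b <;>
      simp [p1p2, SimpleGraph.fromRel_adj, huv, huv.symm, h1, h2, hne, hu, hv,
        fun h => h1 (G.adj_symm h), fun h => h2 (G.adj_symm h)] <;>
      tauto

lemma edgeless_isAcyclic {α : Type*} {H : SimpleGraph α} (h : ∀ a b, ¬ H.Adj a b) :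
    H.IsAcyclic := by
  intro v c hc
  cases c with
  | nil => exact hc.ne_nil rfl
  | cons h1 p => exact h _ _ h1

lemma star_isAcyclic {α : Type*} {H : SimpleGraph α} (w0 : α)
    (h : ∀ ⦃a b⦄, H.Adj a b → a = w0 ∨ b = w0) : H.IsAcyclic := by
  intro v c hc
  have h3 := hc.three_le_length
  cases c with
  | nil => exact hc.ne_nil rfl
  | cons h1 p =>
    rename_i a
    cases p with
    | nil => exact H.irrefl h1
    | cons h2 q =>
      rename_i b
      cases q with
      | nil => simp [SimpleGraph.Walk.length_cons] at h3
      | cons h3' r =>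
        rename_i d
        have hnd := hc.2
        simp only [SimpleGraph.Walk.support_cons, List.tail_cons, List.nodup_cons,
          List.mem_cons] at hnd
        obtain ⟨ha1, hb1, _⟩ := hnd
        push_neg at ha1
        obtain ⟨hab, ha2⟩ := ha1
        have hvr := r.end_mem_support
        have hdr := r.start_mem_support
        rcases h h1 with hv | ha
        · rcases h h2 with h' | h'
          · exact ha2 (by rw [h'.trans hv.symm]; exact hvr)
          · exact hb1 (by rw [h'.trans hv.symm]; exact hvr)
        · rcases h h3' with h' | h'
          · exact hab (ha.trans h'.symm)
          · exact ha2 (by rw [ha.trans h'.symm]; exact hdr)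

lemma triangle_not_acyclic {α : Type*} {H : SimpleGraph α} {a b c : α}
    (hab : H.Adj a b) (hbc : H.Adj b c) (hca : H.Adj c a) : ¬ H.IsAcyclic := by
  intro hac
  refine hac (Walk.cons hab (Walk.cons hbc (Walk.cons hca Walk.nil))) ?_
  have h1 := hab.ne
  have h2 := hbc.ne
  have h3 := hca.ne
  simp [Walk.isCycle_def, Walk.isTrail_def, Sym2.eq_iff, List.nodup_cons]
  tauto

lemma c4_not_acyclic {α : Type*} {H : SimpleGraph α} {a b c d : α}
    (hab : H.Adj a b) (hbc : H.Adj b c) (hcd : H.Adj c d) (hda : H.Adj d a)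
    (hac : a ≠ c) (hbd : b ≠ d) : ¬ H.IsAcyclic := by
  intro hacy
  refine hacy (Walk.cons hab (Walk.cons hbc (Walk.cons hcd (Walk.cons hda Walk.nil)))) ?_
  have h1 := hab.ne
  have h2 := hbc.ne
  have h3 := hcd.ne
  have h4 := hda.ne
  simp [Walk.isCycle_def, Walk.isTrail_def, Sym2.eq_iff, List.nodup_cons]
  tauto

/-- In an induced acyclic subgraph of a complete multipartite graph,
there are no two vertex-disjoint edges. -/
lemma ntd {V : Type*} {G : SimpleGraph V} (hfree : HFree p1p2 G) {s : Set V}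
    (hs : (G.induce s).IsAcyclic) {p q r t : V}
    (hp : p ∈ s) (hq : q ∈ s) (hr : r ∈ s) (ht : t ∈ s)
    (hpq : G.Adj p q) (hrt : G.Adj r t)
    (h1 : p ≠ r) (h2 : p ≠ t) (h3 : q ≠ r) (h4 : q ≠ t) : False := by
  have hpr : G.Adj p r ∨ G.Adj p t := by
    by_contra hc
    push_neg at hc
    rcases good hfree hrt (fun h => hc.1 h.symm) (fun h => hc.2 h.symm) with h | h
    · exact h1 h.symm
    · exact h2 h.symm
  have hqr : G.Adj q r ∨ G.Adj q t := by
    by_contra hc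
    push_neg at hc
    rcases good hfree hrt (fun h => hc.1 h.symm) (fun h => hc.2 h.symm) with h | h
    · exact h3 h.symm
    · exact h4 h.symm
  set P : s := ⟨p, hp⟩
  set Q : s := ⟨q, hq⟩
  set R : s := ⟨r, hr⟩
  set T' : s := ⟨t, ht⟩
  rcases hpr with h5 | h5 <;> rcases hqr with h6 | h6
  · exact triangle_not_acyclic (a := P) (b := Q) (c := R)
      (comap_adj.mpr hpq) (comap_adj.mpr h6) (comap_adj.mpr h5.symm) hs
  · exact c4_not_acyclic (a := P) (b := Q) (c := T') (d := R)
      (comap_adj.mpr hpq) (comap_adj.mpr h6) (comap_adj.mpr hrt.symm) (comap_adj.mpr h5.symm)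
      (by simp [P, T', Subtype.ext_iff, h2]) (by simp [Q, R, Subtype.ext_iff, h3]) hs
  · exact c4_not_acyclic (a := P) (b := Q) (c := R) (d := T')
      (comap_adj.mpr hpq) (comap_adj.mpr h6) (comap_adj.mpr hrt) (comap_adj.mpr h5.symm)
      (by simp [P, R, Subtype.ext_iff, h1]) (by simp [Q, T', Subtype.ext_iff, h4]) hs
  · exact triangle_not_acyclic (a := P) (b := Q) (c := T')
      (comap_adj.mpr hpq) (comap_adj.mpr h6) (comap_adj.mpr h5.symm) hs

/-- An acyclic induced subgraph of a complete multipartite graph is a star: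
all its edges pass through one vertex. -/
lemma fvs_star {V : Type*} {G : SimpleGraph V} (hfree : HFree p1p2 G) (x0 : V)
    {s : Set V} (hs : (G.induce s).IsAcyclic) :
    ∃ w, ∀ ⦃a b⦄, a ∈ s → b ∈ s → G.Adj a b → a = w ∨ b = w := by
  by_cases he : ∃ a ∈ s, ∃ b ∈ s, G.Adj a b
  · obtain ⟨a, ha, b, hb, hab⟩ := he
    by_cases hA : ∀ u v, u ∈ s → v ∈ s → G.Adj u v → u = a ∨ v = a
    · exact ⟨a, fun u v hu hv huv => hA u v hu hv huv⟩
    · push_neg at hA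
      obtain ⟨c, d, hcs, hds, hcd, hac, had⟩ := hA
      refine ⟨b, ?_⟩
      intro u v hu hv huv
      by_contra hcon
      push_neg at hcon
      obtain ⟨hub, hvb⟩ := hcon
      have hbcd : b = c ∨ b = d := by
        by_contra hc2
        push_neg at hc2
        exact ntd hfree hs ha hb hcs hds hab hcd (fun h => hac h.symm)
          (fun h => had h.symm) hc2.1 hc2.2
      obtain ⟨c', hc's, hc'b, hc'a⟩ : ∃ c', c' ∈ s ∧ G.Adj c' b ∧ c' ≠ a := by
        rcases hbcd with rfl | rfl
        · exact ⟨d, hds, hcd.symm, fun h => had h⟩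
        · exact ⟨c, hcs, hcd, fun h => hac h⟩
      have hauv : a = u ∨ a = v := by
        by_contra hc2
        push_neg at hc2
        exact ntd hfree hs ha hb hu hv hab huv hc2.1 hc2.2
          (fun h => hub h.symm) (fun h => hvb h.symm)
      obtain ⟨u', hu's, hau', hu'b⟩ : ∃ u', u' ∈ s ∧ G.Adj a u' ∧ u' ≠ b := by
        rcases hauv with rfl | rfl
        · exact ⟨v, hv, huv, hvb⟩
        · exact ⟨u, hu, huv.symm, hub⟩
      by_cases hu'c : u' = c'
      · subst hu'c
        exact triangle_not_acyclic (a := (⟨a, ha⟩ : s)) (b := ⟨u', hu's⟩) (c := ⟨b, hb⟩)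
          (comap_adj.mpr hau') (comap_adj.mpr hc'b) (comap_adj.mpr hab.symm) hs
      · exact ntd hfree hs ha hu's hc's hb hau' hc'b hc'a.symm hab.ne hu'c hu'b
  · push_neg at he
    exact ⟨x0, fun u v hu hv huv => absurd huv (he u hu v hv)⟩

open Classical in
/-- The multipartite class of `v`: vertices equal or non-adjacent to `v`. -/
noncomputable def cls {V : Type*} [Fintype V] (G : SimpleGraph V) (v : V) : Finset V :=
  Finset.univ.filter (fun u => u = v ∨ ¬ G.Adj u v)

lemma mem_cls {V : Type*} [Fintype V] {G : SimpleGraph V} {u v : V} :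
    u ∈ cls G v ↔ (u = v ∨ ¬ G.Adj u v) := by
  simp [cls]

lemma mem_cls_self {V : Type*} [Fintype V] (G : SimpleGraph V) (v : V) :
    v ∈ cls G v := mem_cls.mpr (Or.inl rfl)

lemma cls_symm {V : Type*} [Fintype V] {G : SimpleGraph V} {u v : V}
    (h : u ∈ cls G v) : v ∈ cls G u := by
  rw [mem_cls] at h ⊢
  rcases h with rfl | h
  · exact Or.inl rfl
  · exact Or.inr fun h' => h h'.symm

lemma cls_indep {V : Type*} [Fintype V] {G : SimpleGraph V} (hfree : HFree p1p2 G)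
    {v a b : V} (ha : a ∈ cls G v) (hb : b ∈ cls G v) : ¬ G.Adj a b := by
  rw [mem_cls] at ha hb
  intro hadj
  rcases ha with rfl | ha
  · rcases hb with rfl | hb
    · exact G.irrefl hadj
    · exact hb hadj.symm
  · rcases hb with rfl | hb
    · exact ha hadj
    · rcases good hfree hadj ha hb with rfl | rfl
      · exact hb hadj.symm
      · exact ha hadj

lemma cls_trans {V : Type*} [Fintype V] {G : SimpleGraph V} (hfree : HFree p1p2 G)
    {z u v : V} (h1 : z ∈ cls G u) (h2 : u ∈ cls G v) : z ∈ cls G v := by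
  rw [mem_cls] at h1 h2 ⊢
  rcases h1 with rfl | h1
  · exact h2
  · rcases h2 with rfl | h2
    · exact Or.inr h1
    · by_contra hc
      push_neg at hc
      obtain ⟨hzv, hadj⟩ := hc
      rcases good hfree hadj h1 (fun h => h2 h.symm) with rfl | rfl
      · exact h2 hadj
      · exact h1 hadj

lemma cls_eq {V : Type*} [Fintype V] {G : SimpleGraph V} (hfree : HFree p1p2 G)
    {u v : V} (h : u ∈ cls G v) : cls G u = cls G v := by
  ext z
  constructor
  · intro hz; exact cls_trans hfree hz h
  · intro hz; exact cls_trans hfree hz (cls_symm h)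

lemma key {V : Type*} [Fintype V] {G : SimpleGraph V} (hfree : HFree p1p2 G)
    {T : Finset V} (hTf : IsFVS G T) (hTi : IsIS G ↑T)
    (S : Finset V) (hS : IsFVS G S) :
    ∃ S' : Finset V, IsFVS G S' ∧ IsIS G ↑S' ∧ S'.card ≤ S.card := by
  classical
  by_cases hcardTS : T.card ≤ S.card
  · exact ⟨T, hTf, hTi, hcardTS⟩
  by_cases hedge : ∃ x y, G.Adj x y
  swap
  · push_neg at hedge
    refine ⟨∅, ?_, by simp [IsIS], by simp⟩
    exact edgeless_isAcyclic (fun a b h => hedge _ _ (comap_adj.mp h))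
  obtain ⟨x0, y0, hxy0⟩ := hedge
  have hTne : T.Nonempty := by
    rcases Finset.eq_empty_or_nonempty T with rfl | h
    · simp at hcardTS
    · exact h
  obtain ⟨t0, ht0⟩ := hTne
  obtain ⟨w, hw⟩ := fvs_star hfree x0 hS
  obtain ⟨x, hx⟩ := fvs_star hfree x0 hTf
  set n := Fintype.card V with hn
  set I : Finset V := Sᶜ \ {w} with hIdef
  have hmemsS : ∀ {a : V}, a ∈ Sᶜ → (a ∈ ((↑S : Set V)ᶜ)) := by
    intro a ha; simpa using ha
  have hIindep : ∀ a ∈ I, ∀ b ∈ I, ¬ G.Adj a b := by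
    intro a ha b hb hadj
    rw [hIdef, Finset.mem_sdiff, Finset.mem_singleton] at ha hb
    rcases hw (hmemsS ha.1) (hmemsS hb.1) hadj with rfl | rfl
    · exact ha.2 rfl
    · exact hb.2 rfl
  have hScompl_sub : Sᶜ ⊆ insert w I := by
    intro v hv
    rw [Finset.mem_insert, hIdef, Finset.mem_sdiff, Finset.mem_singleton]
    by_cases h : v = w
    · exact Or.inl h
    · exact Or.inr ⟨hv, h⟩
  have hTsub : ∀ u ∈ T, u ∈ cls G t0 := by
    intro u hu
    rw [mem_cls]
    by_cases h : u = t0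
    · exact Or.inl h
    · exact Or.inr (hTi (by simpa using hu) (by simpa using ht0) h)
  set J : Finset V := Tᶜ \ {x} with hJdef
  have hmemsT : ∀ {a : V}, a ∈ Tᶜ → (a ∈ ((↑T : Set V)ᶜ)) := by
    intro a ha; simpa using ha
  have hJindep : ∀ a ∈ J, ∀ b ∈ J, ¬ G.Adj a b := by
    intro a ha b hb hadj
    rw [hJdef, Finset.mem_sdiff, Finset.mem_singleton] at ha hb
    rcases hx (hmemsT ha.1) (hmemsT hb.1) hadj with rfl | rfl
    · exact ha.2 rfl
    · exact hb.2 rfl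
  obtain ⟨e0, hJE⟩ : ∃ e0, ∀ u ∈ J, u ∈ cls G e0 := by
    rcases Finset.eq_empty_or_nonempty J with h | ⟨j0, hj0⟩
    · exact ⟨t0, by simp [h]⟩
    · refine ⟨j0, fun u hu => ?_⟩
      rw [mem_cls]
      by_cases h : u = j0
      · exact Or.inl h
      · exact Or.inr (hJindep u hu j0 hj0)
  have hcover : ∀ v : V, v ∈ cls G t0 ∨ v ∈ cls G e0 ∨ v = x := by
    intro v
    by_cases hv : v ∈ T
    · exact Or.inl (hTsub v hv)
    · by_cases hvx : v = x
      · exact Or.inr (Or.inr hvx)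
      · refine Or.inr (Or.inl (hJE v ?_))
        rw [hJdef, Finset.mem_sdiff, Finset.mem_singleton]
        exact ⟨Finset.mem_compl.mpr hv, hvx⟩
  obtain ⟨F, Fo, hF, hFo, hFoF, hcov⟩ :
      ∃ F Fo : Finset V, (∃ a, F = cls G a) ∧ (∃ a, Fo = cls G a) ∧ Fo.card ≤ F.card ∧
        ∀ v, v ∈ F ∨ v ∈ Fo ∨ v = x := by
    rcases le_total (cls G e0).card (cls G t0).card with h | h
    · exact ⟨_, _, ⟨t0, rfl⟩, ⟨e0, rfl⟩, h, hcover⟩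
    · refine ⟨_, _, ⟨e0, rfl⟩, ⟨t0, rfl⟩, h, fun v => ?_⟩
      rcases hcover v with h' | h' | h'
      · exact Or.inr (Or.inl h')
      · exact Or.inl h'
      · exact Or.inr (Or.inr h')
  obtain ⟨f0, hFf0⟩ := hF
  have hFne : f0 ∈ F := hFf0 ▸ mem_cls_self G f0
  have hFposs : 0 < F.card := Finset.card_pos.mpr ⟨f0, hFne⟩
  have hclsF : ∀ v : V, (cls G v).card ≤ F.card := by
    intro v
    rcases hcov v with hv | hv | hvx
    · have : cls G v = F := by rw [hFf0] at hv ⊢; exact cls_eq hfree hv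
      rw [this]
    · obtain ⟨g0, hFog0⟩ := hFo
      have : cls G v = Fo := by rw [hFog0] at hv ⊢; exact cls_eq hfree hv
      rw [this]; exact hFoF
    · by_cases h1 : v ∈ F
      · have : cls G v = F := by rw [hFf0] at h1 ⊢; exact cls_eq hfree h1
        rw [this]
      · by_cases h2 : v ∈ Fo
        · obtain ⟨g0, hFog0⟩ := hFo
          have : cls G v = Fo := by rw [hFog0] at h2 ⊢; exact cls_eq hfree h2
          rw [this]; exact hFoF
        · have hsub : cls G v ⊆ {v} := by
            intro z hz
            rcases hcov z with h' | h' | hzx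
            · exfalso
              apply h1
              rw [hFf0] at h' ⊢
              rw [← cls_eq hfree h']
              exact cls_symm hz
            · exfalso
              obtain ⟨g0, hFog0⟩ := hFo
              apply h2
              rw [hFog0] at h' ⊢
              rw [← cls_eq hfree h']
              exact cls_symm hz
            · rw [Finset.mem_singleton, hzx, hvx]
          calc (cls G v).card ≤ 1 := by simpa using Finset.card_le_card hsub
            _ ≤ F.card := hFposs
  have hIcard : I.card ≤ F.card := by
    rcases Finset.eq_empty_or_nonempty I with h | ⟨i0, hi0⟩
    · simp [h]
    · have hsub : I ⊆ cls G i0 := by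
        intro u hu
        rw [mem_cls]
        by_cases h : u = i0
        · exact Or.inl h
        · exact Or.inr (hIindep u hu i0 hi0)
      exact le_trans (Finset.card_le_card hsub) (hclsF i0)
  have hFindep : ∀ a ∈ F, ∀ b ∈ F, ¬ G.Adj a b := by
    intro a ha b hb
    rw [hFf0] at ha hb
    exact cls_indep hfree ha hb
  obtain ⟨g0, hFog0⟩ := hFo
  have hFoindep : ∀ a ∈ Fo, ∀ b ∈ Fo, ¬ G.Adj a b := by
    intro a ha b hb
    rw [hFog0] at ha hb
    exact cls_indep hfree ha hb
  have hFu : Fᶜ.Nonempty := by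
    rcases Finset.eq_empty_or_nonempty Fᶜ with h | h
    · exfalso
      have hall : ∀ v : V, v ∈ F := by
        intro v
        by_contra hv
        exact Finset.notMem_empty v (h ▸ Finset.mem_compl.mpr hv)
      exact hFindep x0 (hall x0) y0 (hall y0) hxy0
    · exact h
  obtain ⟨z, hzF, hcovz⟩ : ∃ z, z ∉ F ∧ ∀ v, v ∉ F → v ≠ z → v ∈ Fo := by
    by_cases hxF : x ∈ F
    · obtain ⟨z, hz⟩ := hFu
      refine ⟨z, Finset.mem_compl.mp hz, fun v hv hne => ?_⟩
      rcases hcov v with h | h | hvx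
      · exact absurd h hv
      · exact h
      · exact absurd (by rw [hvx]; exact hxF) hv
    · refine ⟨x, hxF, fun v hv hne => ?_⟩
      rcases hcov v with h | h | hvx
      · exact absurd h hv
      · exact h
      · exact absurd hvx hne
  refine ⟨(F ∪ {z})ᶜ, ?_, ?_, ?_⟩
  · rw [IsFVS]
    have hset : ((↑((F ∪ {z})ᶜ) : Set V))ᶜ = ↑(F ∪ {z}) := by
      rw [Finset.coe_compl, compl_compl]
    rw [hset]
    apply star_isAcyclic (w0 := (⟨z, by simp⟩ : (↑(F ∪ {z}) : Set V)))
    rintro ⟨a, hA⟩ ⟨b, hB⟩ hadj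
    have hab : G.Adj a b := comap_adj.mp hadj
    simp only [Finset.coe_union, Finset.coe_singleton, Set.mem_union,
      Set.mem_singleton_iff, Finset.mem_coe] at hA hB
    rcases hA with hA | hA
    · rcases hB with hB | hB
      · exact absurd hab (hFindep a hA b hB)
      · exact Or.inr (Subtype.ext hB)
    · exact Or.inl (Subtype.ext hA)
  · intro a ha b hb hne
    simp only [Finset.coe_compl, Set.mem_compl_iff, Finset.mem_coe,
      Finset.mem_union, Finset.mem_singleton] at ha hb
    push_neg at ha hb
    exact hFoindep a (hcovz a ha.1 ha.2) b (hcovz b hb.1 hb.2)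
  · have h1 : (F ∪ {z}).card = F.card + 1 := by
      rw [Finset.card_union_of_disjoint (by simpa using hzF)]
      simp
    have h2 : Sᶜ.card ≤ I.card + 1 :=
      le_trans (Finset.card_le_card hScompl_sub) (Finset.card_insert_le _ _)
    have h3 : ((F ∪ {z})ᶜ).card = n - (F ∪ {z}).card := Finset.card_compl _
    have h4 : Sᶜ.card = n - S.card := Finset.card_compl _
    have h5 : S.card ≤ n := Finset.card_le_univ _
    have h6 : (F ∪ {z}).card ≤ n := Finset.card_le_univ _
    omega

end Helpers

theorem stmt_11 {V : Type*} [Fintype V] (G : SimpleGraph V)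
    (hnb : NearBip G) (hfree : HFree p1p2 G) : ifvs G = fvs G := by
  classical
  obtain ⟨T, hTf, hTi⟩ := hnb
  have hset1 : ({n | ∃ S : Finset V, IsFVS G S ∧ IsIS G ↑S ∧ S.card = n}).Nonempty :=
    ⟨T.card, T, hTf, hTi, rfl⟩
  have h1 : fvs G ≤ ifvs G := by
    obtain ⟨S, hS, hSi, hScard⟩ := Nat.sInf_mem hset1
    exact Nat.sInf_le ⟨S, hS, hScard⟩
  have h2 : ifvs G ≤ fvs G := by
    have hne : ({n | ∃ S : Finset V, IsFVS G S ∧ S.card = n}).Nonempty :=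
      ⟨T.card, T, hTf, rfl⟩
    obtain ⟨S, hS, hScard⟩ := Nat.sInf_mem hne
    obtain ⟨S', h1', h2', h3'⟩ := key hfree hTf hTi S hS
    calc ifvs G ≤ S'.card := Nat.sInf_le ⟨S', h1', h2', rfl⟩
      _ ≤ S.card := h3'
      _ = fvs G := hScard
  omega
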